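/- Let σ be the logistic squasher, let K ∈ ℕ, γ_n* > 0, β_n > 0 with max{K, β_n, γ_n*} ≤ n^{c₆₀}, and define 𝔽 as the class of all functions f : ℝ^d → ℝ of the form f(x) = Σ_{k=1}^K a_k·σ(Σ_{j=1}^d b_{k,j}·x^{(j)} + b_{k,0}) for real coefficients a_k, b_{k,j} satisfying Σ_{k=1}^K a_k² ≤ γ_n*. Then for any x₁ⁿ ∈ (ℝ^d)ⁿ, log(𝒩₁(1/(n·β_n), 𝔽, x₁ⁿ)) ≤ c₆₁·(log n)·K. -/

import Mathlib

noncomputable section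

abbrev Evec (d : ℕ) := EuclideanSpace ℝ (Fin d)

/-- The logistic squasher. -/
def logistic (x : ℝ) : ℝ := 1 / (1 + Real.exp (-x))

/-- `IsL1Cover n z 𝓕 ε N` means that there exist `N` functions forming an
`ε`-`‖·‖₁`-cover of the class `𝓕` on the points `z₁,…,z_n`, i.e. for every `f ∈ 𝓕`
there is a `j` with `(1/n) Σ_i |f(z_i) − g_j(z_i)| < ε`. Hence the covering number
`𝒩₁(ε,𝓕,z₁ⁿ)` is the least `N` with `IsL1Cover n z 𝓕 ε N`. -/
def IsL1Cover {α : Type*} (n : ℕ) (z : Fin n → α) (𝓕 : Set (α → ℝ)) (ε : ℝ) (N : ℕ) : Prop :=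
  ∃ g : Fin N → α → ℝ, ∀ f ∈ 𝓕, ∃ j : Fin N, (∑ i, |f (z i) - g j (z i)|) / n < ε

/-- The class of shallow logistic networks with `K` neurons whose squared outer weights
sum to at most `γ`. -/
def logClass (d K : ℕ) (γ : ℝ) : Set (Evec d → ℝ) :=
  {f | ∃ (a : Fin K → ℝ) (b : Fin K → Evec d) (b0 : Fin K → ℝ),
    (∑ k, (a k) ^ 2 ≤ γ) ∧
    f = fun x => ∑ k, a k * logistic ((inner ℝ (b k) x : ℝ) + b0 k)}

lemma logistic_pos (x : ℝ) : 0 < logistic x := by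
  unfold logistic
  positivity

lemma logistic_lt_one (x : ℝ) : logistic x < 1 := by
  unfold logistic
  rw [div_lt_one (by positivity)]
  linarith [Real.exp_pos (-x)]

lemma logistic_strictMono : StrictMono logistic := by
  intro a b hab
  unfold logistic
  apply div_lt_div_of_pos_left one_pos (by positivity)
  have := Real.exp_lt_exp.2 (neg_lt_neg hab)
  linarith

lemma logistic_logit {u : ℝ} (h0 : 0 < u) (h1 : u < 1) :
    logistic (Real.log (u / (1 - u))) = u := by
  unfold logistic
  have h2 : 0 < 1 - u := by linarith
  rw [← Real.log_inv, Real.exp_log (by positivity)]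
  field_simp
  ring

/-- one-sided version -/
lemma close_of_same_pattern_aux (m : ℕ) (hm : 1 ≤ m) (s t : ℝ)
    (h : ∀ j : ℕ, 1 ≤ j → j ≤ m - 1 →
      (Real.log ((j/m) / (1 - j/m)) ≤ s ↔ Real.log ((j/m) / (1 - j/m)) ≤ t)) :
    logistic s - logistic t ≤ 1/m := by
  by_contra hc
  push_neg at hc
  have hmR : (0:ℝ) < m := by exact_mod_cast hm
  set j : ℕ := ⌊logistic t * m⌋₊ + 1 with hj
  have hjt : logistic t < j / m := by
    rw [lt_div_iff₀ hmR]
    push_cast [hj]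
    exact Nat.lt_floor_add_one _
  have hjs : (j:ℝ) / m < logistic s := by
    have hlt : (j:ℝ) ≤ logistic t * m + 1 := by
      push_cast [hj]
      have := Nat.floor_le (mul_nonneg (logistic_pos t).le hmR.le)
      linarith
    rw [div_lt_iff₀ hmR]
    have h1m : logistic t + 1/m < logistic s := by linarith
    calc (j:ℝ) ≤ logistic t * m + 1 := hlt
      _ = (logistic t + 1/m) * m := by field_simp
      _ < logistic s * m := mul_lt_mul_of_pos_right h1m hmR
  have hj1 : 1 ≤ j := Nat.le_add_left 1 _
  have hjm : j ≤ m - 1 := by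
    have hjm' : (j:ℝ) < m := by
      have h1 := logistic_lt_one s
      have h2 : (j:ℝ)/m < 1 := lt_trans hjs h1
      rw [div_lt_one hmR] at h2
      exact h2
    have : j < m := by exact_mod_cast hjm'
    omega
  -- u := j/m ∈ (0,1)
  have hu0 : (0:ℝ) < j/m := by positivity
  have hu1 : (j:ℝ)/m < 1 := lt_trans hjs (logistic_lt_one s)
  have hlog := logistic_logit hu0 hu1
  set τ := Real.log ((j/m) / (1 - j/m)) with hτ
  have hτs : τ ≤ s := by
    by_contra hts
    push_neg at hts
    have := logistic_strictMono hts
    rw [hlog] at this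
    linarith
  have hτt : ¬ (τ ≤ t) := by
    intro htt
    have := logistic_strictMono.monotone htt
    rw [hlog] at this
    linarith
  exact hτt ((h j hj1 hjm).1 hτs)

lemma close_of_same_pattern (m : ℕ) (hm : 1 ≤ m) (s t : ℝ)
    (h : ∀ j : ℕ, 1 ≤ j → j ≤ m - 1 →
      (Real.log ((j/m) / (1 - j/m)) ≤ s ↔ Real.log ((j/m) / (1 - j/m)) ≤ t)) :
    |logistic s - logistic t| ≤ 1/m := by
  rw [abs_le]
  constructor
  · have := close_of_same_pattern_aux m hm t s (fun j h1 h2 => (h j h1 h2).symm)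
    linarith
  · exact close_of_same_pattern_aux m hm s t h

open Finset

lemma card_le_of_small_sets {ι : Type*} [Fintype ι] [DecidableEq ι] (k : ℕ)
    (𝒮 : Finset (Finset ι)) (h : ∀ B ∈ 𝒮, B.card ≤ k) :
    𝒮.card ≤ (Fintype.card ι + 1) ^ k := by
  classical
  have hinj : Set.InjOn (fun (B : Finset ι) => (fun i : Fin k => B.toList[ (i:ℕ) ]? )) 𝒮 := by
    intro B hB B' hB' hEq
    have hcB : B.card ≤ k := h B hB
    have hcB' : B'.card ≤ k := h B' hB'
    have hlist : B.toList = B'.toList := by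
      apply List.ext_getElem?
      intro i
      by_cases hik : i < k
      · exact congrFun hEq ⟨i, hik⟩
      · rw [List.getElem?_eq_none, List.getElem?_eq_none]
        · rw [Finset.length_toList]; omega
        · rw [Finset.length_toList]; omega
    have := congrArg List.toFinset hlist
    rwa [Finset.toList_toFinset, Finset.toList_toFinset] at this
  calc 𝒮.card ≤ (Finset.univ : Finset (Fin k → Option ι)).card :=
        Finset.card_le_card_of_injOn _ (fun _ _ => Finset.mem_univ _) hinj
    _ = (Fintype.card ι + 1) ^ k := by
        simp [Fintype.card_option]

lemma pattern_cover (d : ℕ) {ι : Type*} [Fintype ι] [DecidableEq ι]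
    (v : ι → Evec d) (c : ι → ℝ) :
    ∃ R : Finset (Evec d × ℝ), R.card ≤ (Fintype.card ι + 1)^(d+2) ∧
      ∀ w : Evec d × ℝ, ∃ p ∈ R, ∀ q : ι,
        ((0:ℝ) ≤ inner ℝ (v q) w.1 + w.2 - c q ↔ (0:ℝ) ≤ inner ℝ (v q) p.1 + p.2 - c q) := by
  classical
  set f : (Evec d × ℝ) → ι → ℝ := fun w q => (inner ℝ (v q) w.1 : ℝ) + w.2 - c q with hf
  set S : (Evec d × ℝ) → Finset ι := fun w => univ.filter (fun q => 0 ≤ f w q) with hS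
  have hfin : (Set.range S).Finite := Set.toFinite _
  set 𝒜 : Finset (Finset ι) := hfin.toFinset with h𝒜
  -- every shattered set is small
  have hshat : ∀ B ∈ 𝒜.shatterer, B.card ≤ d + 2 := by
    intro B hB
    rw [Finset.mem_shatterer] at hB
    by_contra hcard
    push_neg at hcard
    set ψ : ι → Evec d × ℝ × ℝ := fun q => (v q, 1, - c q) with hψ
    have hdep : ∃ g : B → ℝ, ∑ q : B, g q • ψ q = 0 ∧ ∃ q, g q ≠ 0 := by
      apply Fintype.not_linearIndependent_iff.1
      intro hli
      have h1 := LinearIndependent.fintype_card_le_finrank hli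
      rw [Fintype.card_coe] at h1
      have h2 : Module.finrank ℝ (Evec d × ℝ × ℝ) = d + 2 := by
        simp [Module.finrank_prod, finrank_euclideanSpace_fin]
      omega
    obtain ⟨g, hg0, q0, hq0⟩ := hdep
    set G : ι → ℝ := fun q => if h : q ∈ B then g ⟨q, h⟩ else 0 with hG
    have hGq0 : G q0 ≠ 0 := by
      simp only [hG, dif_pos q0.2]
      simpa using hq0
    have hGsum : ∑ q ∈ B, G q • ψ q = 0 := by
      rw [← Finset.sum_attach B (fun q => G q • ψ q)]
      rw [← hg0]
      apply Finset.sum_congr rfl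
      intro x _
      simp [hG, x.2]
    -- componentwise
    have hA : ∑ q ∈ B, G q • (v q) = (0 : Evec d) := by
      have := congrArg Prod.fst hGsum
      rw [Prod.fst_sum] at this
      simpa [hψ] using this
    have hsnd := congrArg Prod.snd hGsum
    rw [Prod.snd_sum] at hsnd
    have hB1 : ∑ q ∈ B, G q = 0 := by
      have := congrArg Prod.fst hsnd
      rw [Prod.fst_sum] at this
      simpa [hψ] using this
    have hC : ∑ q ∈ B, G q * c q = 0 := by
      have := congrArg Prod.snd hsnd
      rw [Prod.snd_sum] at this
      have h2 : ∑ q ∈ B, G q * (- c q) = 0 := by simpa [smul_eq_mul, hψ] using this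
      have h3 : ∑ q ∈ B, G q * (- c q) = - ∑ q ∈ B, G q * c q := by
        rw [← Finset.sum_neg_distrib]
        exact Finset.sum_congr rfl (fun q _ => by ring)
      rw [h3] at h2
      linarith
    have hsum : ∀ w : Evec d × ℝ, ∑ q ∈ B, G q * f w q = 0 := by
      intro w
      have hinner : ∑ q ∈ B, G q * (inner ℝ (v q) w.1 : ℝ) = (inner ℝ (∑ q ∈ B, G q • v q) w.1 : ℝ) := by
        rw [sum_inner]
        apply Finset.sum_congr rfl
        intro q _
        rw [real_inner_smul_left]
      have expand : ∀ q, G q * f w q = G q * (inner ℝ (v q) w.1 : ℝ) + G q * w.2 - G q * c q := by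
        intro q; simp only [hf]; ring
      calc ∑ q ∈ B, G q * f w q
          = (∑ q ∈ B, G q * (inner ℝ (v q) w.1 : ℝ)) + (∑ q ∈ B, G q * w.2)
            - ∑ q ∈ B, G q * c q := by
            rw [← Finset.sum_add_distrib, ← Finset.sum_sub_distrib]
            exact Finset.sum_congr rfl (fun q _ => expand q)
        _ = 0 := by
            rw [hinner, hA, ← Finset.sum_mul, hB1, hC]
            simp
    -- shattering gives parameter realizing pattern {q : 0 < G q}
    have hrealize : ∀ t ⊆ B, ∃ w : Evec d × ℝ, ∀ q ∈ B, (q ∈ t ↔ 0 ≤ f w q) := by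
      intro t ht
      obtain ⟨u, hu, hBu⟩ := hB ht
      rw [h𝒜, Set.Finite.mem_toFinset] at hu
      obtain ⟨w, hw⟩ := hu
      refine ⟨w, fun q hq => ?_⟩
      constructor
      · intro hqt
        have : q ∈ B ∩ u := hBu ▸ hqt
        rw [Finset.mem_inter, ← hw] at this
        have := this.2
        simpa [hS] using this
      · intro hfq
        have hqu : q ∈ u := by rw [← hw]; simp [hS, hfq]
        have : q ∈ B ∩ u := Finset.mem_inter.2 ⟨hq, hqu⟩
        rwa [hBu] at this
    by_cases hneg : ∃ q ∈ B, G q < 0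
    · obtain ⟨w, hw⟩ := hrealize (B.filter (fun q => 0 < G q)) (Finset.filter_subset _ _)
      have hterm : ∀ q ∈ B, 0 ≤ G q * f w q := by
        intro q hq
        rcases lt_trichotomy (G q) 0 with h | h | h
        · have : ¬ (0 ≤ f w q) := by
            intro hge
            have := (hw q hq).2 hge
            rw [Finset.mem_filter] at this
            linarith [this.2]
          push_neg at this
          nlinarith
        · simp [h]
        · have : 0 ≤ f w q := (hw q hq).1 (Finset.mem_filter.2 ⟨hq, h⟩)
          positivity
      obtain ⟨qn, hqn, hqneg⟩ := hneg
      have hstrict : 0 < G qn * f w qn := by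
        have : ¬ (0 ≤ f w qn) := by
          intro hge
          have := (hw qn hqn).2 hge
          rw [Finset.mem_filter] at this
          linarith [this.2]
        push_neg at this
        nlinarith
      have : (0:ℝ) < ∑ q ∈ B, G q * f w q := by
        have h1 : ∑ _q ∈ B, (0:ℝ) < ∑ q ∈ B, G q * f w q :=
          Finset.sum_lt_sum hterm ⟨qn, hqn, hstrict⟩
        simpa using h1
      rw [hsum w] at this
      exact lt_irrefl 0 this
    · push_neg at hneg
      have hGpos : 0 < G q0 := lt_of_le_of_ne (hneg q0 q0.2) (Ne.symm hGq0)
      obtain ⟨w, hw⟩ := hrealize (B.filter (fun q => ¬ 0 < G q)) (Finset.filter_subset _ _)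
      have hterm : ∀ q ∈ B, G q * f w q ≤ 0 := by
        intro q hq
        rcases eq_or_lt_of_le (hneg q hq) with h | h
        · simp [← h]
        · have : ¬ (0 ≤ f w q) := by
            intro hge
            have := (hw q hq).2 hge
            rw [Finset.mem_filter] at this
            exact this.2 h
          push_neg at this
          nlinarith
      have hstrict : G (q0:ι) * f w q0 < 0 := by
        have : ¬ (0 ≤ f w q0) := by
          intro hge
          have := (hw q0 q0.2).2 hge
          rw [Finset.mem_filter] at this
          exact this.2 hGpos
        push_neg at this
        nlinarith
      have hlt : ∑ q ∈ B, G q * f w q < 0 := by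
        have h1 : ∑ q ∈ B, G q * f w q < ∑ q ∈ B, (0:ℝ) :=
          Finset.sum_lt_sum hterm ⟨q0, q0.2, hstrict⟩
        simpa using h1
      rw [hsum w] at hlt
      exact lt_irrefl 0 hlt
  -- count
  have hcard : 𝒜.card ≤ (Fintype.card ι + 1)^(d+2) := by
    calc 𝒜.card ≤ 𝒜.shatterer.card := Finset.card_le_card_shatterer 𝒜
      _ ≤ (Fintype.card ι + 1)^(d+2) := card_le_of_small_sets _ _ hshat
  -- representatives
  set rep : Finset ι → (Evec d × ℝ) := fun A => if h : A ∈ Set.range S then h.choose else (0, 0)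
    with hrep
  refine ⟨𝒜.image rep, le_trans (Finset.card_image_le) hcard, ?_⟩
  intro w
  have hmem : S w ∈ Set.range S := Set.mem_range_self w
  refine ⟨rep (S w), Finset.mem_image_of_mem _ (by rw [h𝒜, Set.Finite.mem_toFinset]; exact hmem), ?_⟩
  intro q
  have hspec : S (hmem.choose) = S w := hmem.choose_spec
  have hrepw : rep (S w) = hmem.choose := by rw [hrep]; simp [dif_pos hmem]
  have : (q ∈ S w) ↔ (q ∈ S (rep (S w))) := by rw [hrepw, hspec]
  simpa [hS, hf] using this

lemma neuron_cover (d n m : ℕ) (hm : 2 ≤ m) (z : Fin n → Evec d) :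
    ∃ R : Finset (Evec d × ℝ), R.card ≤ (n*(m-1) + 1)^(d+2) ∧
      ∀ (b : Evec d) (b0 : ℝ), ∃ p ∈ R, ∀ i : Fin n,
        |logistic ((inner ℝ b (z i) : ℝ) + b0) - logistic ((inner ℝ p.1 (z i) : ℝ) + p.2)| ≤ 1/m := by
  classical
  set c : Fin n × Fin (m-1) → ℝ :=
    fun q => Real.log ((((q.2:ℕ)+1:ℝ)/m) / (1 - ((q.2:ℕ)+1:ℝ)/m)) with hc
  obtain ⟨R, hcard, hcov⟩ := pattern_cover d (fun q : Fin n × Fin (m-1) => z q.1) c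
  refine ⟨R, ?_, ?_⟩
  · simpa [Fintype.card_prod] using hcard
  · intro b b0
    obtain ⟨p, hp, hiff⟩ := hcov (b, b0)
    refine ⟨p, hp, fun i => ?_⟩
    apply close_of_same_pattern m (by omega)
    intro j hj1 hj2
    have hjlt : j - 1 < m - 1 := by omega
    have hq := hiff (i, ⟨j - 1, hjlt⟩)
    have hcq : c (i, ⟨j - 1, hjlt⟩) = Real.log ((j/m) / (1 - j/m)) := by
      simp only [hc]
      congr 2 <;> rw [show ((j-1:ℕ):ℝ) + 1 = (j:ℝ) by
        have : (j - 1) + 1 = j := by omega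
        exact_mod_cast congrArg (Nat.cast : ℕ → ℝ) this]
    rw [hcq] at hq
    simp only [sub_nonneg] at hq
    constructor
    · intro h
      have := hq.1 (by rw [real_inner_comm]; exact h)
      rw [real_inner_comm] at this
      exact this
    · intro h
      have := hq.2 (by rw [real_inner_comm]; exact h)
      rw [real_inner_comm] at this
      exact this

lemma case_one (d K : ℕ) (γ βn : ℝ) (hβn : 0 < βn) (hβ1 : βn ≤ 1) (hγ1 : γ ≤ 1)
    (hK1 : K ≤ 1) (z : Fin 1 → Evec d) :
    IsL1Cover 1 z (logClass d K γ) (1/(1*βn)) 1 := by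
  refine ⟨fun _ _ => 0, ?_⟩
  rintro f ⟨a, b, b0, ha, rfl⟩
  refine ⟨0, ?_⟩
  have hβinv : (1:ℝ) ≤ 1/(1*βn) := by
    rw [one_mul]
    rw [le_div_iff₀ hβn]
    linarith
  have hval : |∑ k, a k * logistic ((inner ℝ (b k) (z 0) : ℝ) + b0 k)| < 1/(1*βn) := by
    interval_cases K
    · simpa using lt_of_lt_of_le one_pos hβinv
    · rw [Fin.sum_univ_one]
      have ha0 : (a 0)^2 ≤ γ := by simpa using ha
      have ha1 : |a 0| ≤ 1 := (sq_le_one_iff_abs_le_one _).1 (le_trans ha0 hγ1)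
      set t := (inner ℝ (b 0) (z 0) : ℝ) + b0 0
      rcases eq_or_ne (a 0) 0 with h | h
      · simp only [h, zero_mul, abs_zero]
        positivity
      · have habs : |a 0 * logistic t| = |a 0| * logistic t := by
          rw [abs_mul, abs_of_pos (logistic_pos t)]
        rw [habs]
        have h2 : |a 0| * logistic t < |a 0| * 1 :=
          mul_lt_mul_of_pos_left (logistic_lt_one t) (abs_pos.2 h)
        calc |a 0| * logistic t < |a 0| * 1 := h2
          _ ≤ 1 := by rw [mul_one]; exact ha1
          _ ≤ 1/(1*βn) := hβinv
  calc (∑ i : Fin 1, |(∑ k, a k * logistic ((inner ℝ (b k) (z i) : ℝ) + b0 k)) - 0|) / (1:ℕ)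
      = |∑ k, a k * logistic ((inner ℝ (b k) (z 0) : ℝ) + b0 k)| := by
        rw [Fin.sum_univ_one]
        simp
    _ < 1/(1*βn) := hval

set_option maxHeartbeats 1000000 in
lemma case_main (d : ℕ) (c : ℝ) (hc : 0 < c) (n K : ℕ) (hn2 : 2 ≤ n) (γ βn : ℝ)
    (hβn : 0 < βn) (hK : (K:ℝ) ≤ (n:ℝ)^c) (hβ : βn ≤ (n:ℝ)^c) (hγn : γ ≤ (n:ℝ)^c)
    (z : Fin n → Evec d) :
    ∃ N : ℕ, 1 ≤ N ∧ IsL1Cover n z (logClass d K γ) (1/(n*βn)) N ∧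
      (N:ℝ) ≤ (n:ℝ)^((4*c+9+(3*c+6)*((d:ℝ)+2)) * K) := by
  classical
  have hn0R : (0:ℝ) < n := by exact_mod_cast Nat.lt_of_lt_of_le Nat.zero_lt_two hn2
  have hn1R : (1:ℝ) ≤ n := by exact_mod_cast Nat.one_le_of_lt hn2
  have hn2R : (2:ℝ) ≤ n := by exact_mod_cast hn2
  have hmono : ∀ {y w : ℝ}, y ≤ w → (n:ℝ)^y ≤ (n:ℝ)^w :=
    fun h => Real.rpow_le_rpow_of_exponent_le hn1R h
  have hone : ∀ {y : ℝ}, 0 ≤ y → (1:ℝ) ≤ (n:ℝ)^y := fun h => Real.one_le_rpow hn1R h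
  have hpos : ∀ y : ℝ, (0:ℝ) < (n:ℝ)^y := fun y => Real.rpow_pos_of_pos hn0R y
  have hmul : ∀ y w : ℝ, (n:ℝ)^y * (n:ℝ)^w = (n:ℝ)^(y+w) :=
    fun y w => (Real.rpow_add hn0R y w).symm
  have h2pow : ∀ (a : ℝ) (p : ℕ), a ≤ (2:ℝ)^(p:ℕ) → a ≤ (n:ℝ)^((p:ℕ):ℝ) := by
    intro a p h
    refine h.trans ?_
    rw [Real.rpow_natCast]
    exact pow_le_pow_left₀ (by norm_num) hn2R p
  -- the grid resolution
  set m : ℕ := ⌈(4:ℝ) * (n:ℝ)^(3*c+2)⌉₊ with hmdef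
  have hm_lb : 4 * (n:ℝ)^(3*c+2) ≤ (m:ℝ) := Nat.le_ceil _
  have hm_posR : (0:ℝ) < m := lt_of_lt_of_le (by positivity) hm_lb
  have hm2 : 2 ≤ m := by
    have h4 : (4:ℝ) ≤ (m:ℝ) := le_trans (by nlinarith [hone (by positivity : (0:ℝ) ≤ 3*c+2)]) hm_lb
    exact_mod_cast le_trans (by norm_num : (2:ℝ) ≤ 4) h4
  have hm_ub : (m:ℝ) ≤ 5 * (n:ℝ)^(3*c+2) := by
    have h1 := Nat.ceil_lt_add_one (by positivity : (0:ℝ) ≤ 4 * (n:ℝ)^(3*c+2))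
    have h2 : (1:ℝ) ≤ (n:ℝ)^(3*c+2) := hone (by positivity)
    rw [← hmdef] at h1
    nlinarith
  have hm_n : (m:ℝ) ≤ (n:ℝ)^(3*c+5) := by
    have h5 : (5:ℝ) ≤ (n:ℝ)^((3:ℕ):ℝ) := h2pow 5 3 (by norm_num)
    calc (m:ℝ) ≤ 5 * (n:ℝ)^(3*c+2) := hm_ub
      _ ≤ (n:ℝ)^((3:ℕ):ℝ) * (n:ℝ)^(3*c+2) := by
          exact mul_le_mul_of_nonneg_right h5 (hpos _).le
      _ = (n:ℝ)^(3*c+5) := by rw [hmul]; congr 1; push_cast; ring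
  clear_value m
  -- neuron cover
  obtain ⟨R, hRcard, hRcov⟩ := neuron_cover d n m hm2 z
  have hR : (R.card:ℝ) ≤ (n:ℝ)^((3*c+6)*((d:ℝ)+2)) := by
    have h1 : ((n*(m-1)+1 : ℕ):ℝ) ≤ (n:ℝ)^(3*c+6) := by
      have hle : (n*(m-1)+1 : ℕ) ≤ n*m := by
        have h2 : n*(m-1) + n = n*m := by
          conv_rhs => rw [show m = (m-1)+1 by omega]
          rw [Nat.mul_add, Nat.mul_one]
        omega
      calc ((n*(m-1)+1 : ℕ):ℝ) ≤ ((n*m : ℕ):ℝ) := by exact_mod_cast hle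
        _ = (n:ℝ) * (m:ℝ) := by push_cast; ring
        _ ≤ (n:ℝ)^(1:ℝ) * (n:ℝ)^(3*c+5) := by
            apply mul_le_mul _ hm_n hm_posR.le (hpos _).le
            rw [Real.rpow_one]
        _ = (n:ℝ)^(3*c+6) := by rw [hmul]; congr 1; ring
    calc (R.card:ℝ) ≤ ((n*(m-1)+1 : ℕ):ℝ)^(d+2 : ℕ) := by exact_mod_cast hRcard
      _ ≤ ((n:ℝ)^(3*c+6))^(d+2 : ℕ) := pow_le_pow_left₀ (by positivity) h1 _
      _ = (n:ℝ)^((3*c+6)*((d:ℝ)+2)) := by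
          rw [← Real.rpow_natCast ((n:ℝ)^(3*c+6)) (d+2), ← Real.rpow_mul (x := (n:ℝ)) hn0R.le]
          congr 1
          push_cast
          ring
  -- outer-weight grid
  set J : ℕ := (⌈(n:ℝ)^c⌉₊ + 1) * m with hJdef
  set A : Finset ℝ := (Finset.Icc (-(J:ℤ)) (J:ℤ)).image (fun j : ℤ => (j:ℝ)/m) with hAdef
  have hA0 : (0:ℝ) ∈ A := by
    rw [hAdef]
    exact Finset.mem_image.2 ⟨0, by simp, by simp⟩
  have hJval : (J:ℝ) = ((⌈(n:ℝ)^c⌉₊:ℝ) + 1) * m := by rw [hJdef]; push_cast; ring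
  have hJge : (n:ℝ)^c * m ≤ (J:ℝ) := by
    rw [hJval]
    have := Nat.le_ceil ((n:ℝ)^c)
    nlinarith
  clear_value J
  have hAround : ∀ a : ℝ, |a| ≤ (n:ℝ)^c → ∃ a' ∈ A, |a - a'| ≤ 1/m := by
    intro a ha
    obtain ⟨ha1, ha2⟩ := abs_le.1 ha
    have hfl : ((⌊a * m⌋ : ℤ):ℝ) ≤ a * m := Int.floor_le _
    have hfl2 : a * m < (⌊a * m⌋:ℝ) + 1 := Int.lt_floor_add_one _
    refine ⟨((⌊a * m⌋ : ℤ):ℝ)/m, ?_, ?_⟩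
    · rw [hAdef]
      apply Finset.mem_image_of_mem
      rw [Finset.mem_Icc]
      constructor
      · rw [Int.le_floor]
        push_cast
        nlinarith
      · have : (⌊a * m⌋:ℝ) ≤ (J:ℝ) := by nlinarith
        exact_mod_cast this
    · rw [abs_le]
      constructor
      · have h1 : ((⌊a * m⌋ : ℤ):ℝ)/m ≤ a := by
          rw [div_le_iff₀ hm_posR]
          exact hfl
        have h2 : (0:ℝ) < 1/m := by positivity
        linarith
      · rw [sub_le_iff_le_add, ← sub_le_iff_le_add']
        rw [sub_le_iff_le_add, ← add_div, le_div_iff₀ hm_posR] at *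
        nlinarith
  have hAcard : (A.card:ℝ) ≤ (n:ℝ)^(4*c+9) := by
    have h1 : A.card ≤ 2*J+1 := by
      refine le_trans (Finset.card_image_le) ?_
      rw [Int.card_Icc]
      omega
    have hceil : (⌈(n:ℝ)^c⌉₊:ℝ) < (n:ℝ)^c + 1 := Nat.ceil_lt_add_one (hpos c).le
    have h3 : (3:ℝ) ≤ (n:ℝ)^((2:ℕ):ℝ) := h2pow 3 2 (by norm_num)
    have honec : (1:ℝ) ≤ (n:ℝ)^c := hone hc.le
    have hJub : (J:ℝ) ≤ (n:ℝ)^(4*c+7) := by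
      calc (J:ℝ) = ((⌈(n:ℝ)^c⌉₊:ℝ) + 1) * m := hJval
        _ ≤ ((n:ℝ)^c + 2) * m := by nlinarith
        _ ≤ (3*(n:ℝ)^c) * m := by nlinarith
        _ ≤ ((n:ℝ)^((2:ℕ):ℝ)*(n:ℝ)^c) * ((n:ℝ)^(3*c+5)) := by
            apply mul_le_mul _ hm_n hm_posR.le (by positivity)
            nlinarith
        _ = (n:ℝ)^(4*c+7) := by rw [hmul, hmul]; congr 1; push_cast; ring
    have h49 : (1:ℝ) ≤ (n:ℝ)^(4*c+7) := hone (by positivity)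
    calc (A.card:ℝ) ≤ ((2*J+1 : ℕ):ℝ) := by exact_mod_cast h1
      _ = 2*(J:ℝ)+1 := by push_cast; ring
      _ ≤ 3*(n:ℝ)^(4*c+7) := by nlinarith
      _ ≤ (n:ℝ)^((2:ℕ):ℝ)*(n:ℝ)^(4*c+7) := by nlinarith
      _ = (n:ℝ)^(4*c+9) := by rw [hmul]; congr 1; push_cast; ring
  -- the cover
  set bld : ((Fin K → ℝ) × (Fin K → Evec d × ℝ)) → (Evec d → ℝ) :=
    fun ap => fun x => ∑ k, ap.1 k * logistic ((inner ℝ (ap.2 k).1 x : ℝ) + (ap.2 k).2) with hbld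
  set I : Finset ((Fin K → ℝ) × (Fin K → Evec d × ℝ)) :=
    (Fintype.piFinset (fun _ : Fin K => A)) ×ˢ (Fintype.piFinset (fun _ : Fin K => R)) with hI
  set G : Finset (Evec d → ℝ) := I.image bld with hGdef
  obtain ⟨p0, hp0, _⟩ := hRcov 0 0
  have hGne : G.Nonempty := by
    refine ⟨bld (fun _ => 0, fun _ => p0), Finset.mem_image_of_mem _ ?_⟩
    exact Finset.mem_product.2 ⟨Fintype.mem_piFinset.2 (fun _ => hA0),
      Fintype.mem_piFinset.2 (fun _ => hp0)⟩
  refine ⟨G.card, hGne.card_pos, ?_, ?_⟩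
  · -- IsL1Cover
    refine ⟨fun j => ((G.equivFin.symm j : G) : Evec d → ℝ), ?_⟩
    rintro f ⟨a, b, b0, ha, rfl⟩
    have hak : ∀ k, |a k| ≤ (n:ℝ)^c := by
      intro k
      have h1 : (a k)^2 ≤ γ :=
        le_trans (Finset.single_le_sum (fun k _ => sq_nonneg (a k)) (Finset.mem_univ k)) ha
      have h2 : |a k| = Real.sqrt ((a k)^2) := (Real.sqrt_sq_eq_abs _).symm
      rw [h2]
      have h3 : Real.sqrt ((a k)^2) ≤ Real.sqrt ((n:ℝ)^c * (n:ℝ)^c) := by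
        apply Real.sqrt_le_sqrt
        nlinarith [hone hc.le]
      rwa [Real.sqrt_mul_self (hpos c).le] at h3
    choose a' ha'A ha' using fun k => hAround (a k) (hak k)
    choose p hpR hp using fun k => hRcov (b k) (b0 k)
    have hmemG : bld (a', p) ∈ G :=
      Finset.mem_image_of_mem _ (Finset.mem_product.2
        ⟨Fintype.mem_piFinset.2 ha'A, Fintype.mem_piFinset.2 hpR⟩)
    refine ⟨G.equivFin ⟨_, hmemG⟩, ?_⟩
    simp only [Equiv.symm_apply_apply]
    have hpt : ∀ i : Fin n,
        |(∑ k, a k * logistic ((inner ℝ (b k) (z i) : ℝ) + b0 k)) - bld (a', p) (z i)|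
          ≤ (K:ℝ)*((n:ℝ)^c+1)/m := by
      intro i
      rw [hbld]
      simp only
      rw [← Finset.sum_sub_distrib]
      refine le_trans (Finset.abs_sum_le_sum_abs _ _) ?_
      have hterm : ∀ k : Fin K,
          |a k * logistic ((inner ℝ (b k) (z i) : ℝ) + b0 k)
            - a' k * logistic ((inner ℝ (p k).1 (z i) : ℝ) + (p k).2)| ≤ ((n:ℝ)^c+1)/m := by
        intro k
        set u := logistic ((inner ℝ (b k) (z i) : ℝ) + b0 k) with hu
        set v := logistic ((inner ℝ (p k).1 (z i) : ℝ) + (p k).2) with hv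
        have hv0 : 0 < v := logistic_pos _
        have hv1 : v < 1 := logistic_lt_one _
        have hdiff : |u - v| ≤ 1/m := hp k i
        have hrw : a k * u - a' k * v = a k * (u - v) + (a k - a' k) * v := by ring
        rw [hrw]
        refine le_trans (abs_add_le _ _) ?_
        rw [abs_mul, abs_mul]
        have h1 : |a k| * |u - v| ≤ (n:ℝ)^c * (1/m) :=
          mul_le_mul (hak k) hdiff (abs_nonneg _) (hpos c).le
        have h2 : |a k - a' k| * |v| ≤ (1/m) * 1 := by
          apply mul_le_mul (ha' k) _ (abs_nonneg _) (by positivity)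
          rw [abs_of_pos hv0]
          exact hv1.le
        calc |a k| * |u - v| + |a k - a' k| * |v| ≤ (n:ℝ)^c * (1/m) + (1/m) * 1 := by linarith
          _ = ((n:ℝ)^c+1)/m := by field_simp
      refine le_trans (Finset.sum_le_sum (fun k _ => hterm k)) ?_
      rw [Finset.sum_const, Finset.card_univ, Fintype.card_fin, nsmul_eq_mul, mul_div_assoc]
    have hsum : (∑ i, |(∑ k, a k * logistic ((inner ℝ (b k) (z i) : ℝ) + b0 k))
        - bld (a', p) (z i)|) ≤ n * ((K:ℝ)*((n:ℝ)^c+1)/m) := by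
      refine le_trans (Finset.sum_le_sum (fun i _ => hpt i)) ?_
      rw [Finset.sum_const, Finset.card_univ, Fintype.card_fin, nsmul_eq_mul]
    have hE : (K:ℝ)*((n:ℝ)^c+1)/m < 1/((n:ℝ)*βn) := by
      have honec : (1:ℝ) ≤ (n:ℝ)^c := hone hc.le
      have hnum : (K:ℝ)*((n:ℝ)^c+1) ≤ 2*(n:ℝ)^(2*c) := by
        have := mul_le_mul hK (by linarith : (n:ℝ)^c+1 ≤ 2*(n:ℝ)^c)
          (by positivity) (hpos c).le
        calc (K:ℝ)*((n:ℝ)^c+1) ≤ (n:ℝ)^c * (2*(n:ℝ)^c) := this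
          _ = 2*((n:ℝ)^c * (n:ℝ)^c) := by ring
          _ = 2*(n:ℝ)^(2*c) := by rw [hmul]; congr 1; ring
      have hstep : (K:ℝ)*((n:ℝ)^c+1)/m ≤ 2*(n:ℝ)^(2*c) / (4*(n:ℝ)^(3*c+2)) := by
        apply div_le_div₀ (by positivity) hnum (by positivity) hm_lb
      refine lt_of_le_of_lt hstep ?_
      rw [div_lt_div_iff₀ (by positivity) (by positivity)]
      have e1 : 2*(n:ℝ)^(2*c) * ((n:ℝ)*βn) ≤ 2*(n:ℝ)^(3*c+1) := by
        have hb : (n:ℝ)*βn ≤ (n:ℝ)^(1:ℝ) * (n:ℝ)^c := by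
          rw [Real.rpow_one]
          exact mul_le_mul_of_nonneg_left hβ hn0R.le
        calc 2*(n:ℝ)^(2*c) * ((n:ℝ)*βn) ≤ 2*(n:ℝ)^(2*c) * ((n:ℝ)^(1:ℝ) * (n:ℝ)^c) := by
              apply mul_le_mul_of_nonneg_left hb (by positivity)
          _ = 2*((n:ℝ)^(2*c) * (n:ℝ)^(1:ℝ) * (n:ℝ)^c) := by ring
          _ = 2*(n:ℝ)^(3*c+1) := by rw [hmul, hmul]; congr 2; ring
      have e2 : (n:ℝ)^(3*c+1) ≤ (n:ℝ)^(3*c+2) := hmono (by linarith)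
      have e3 : (0:ℝ) < (n:ℝ)^(3*c+1) := hpos _
      calc 2*(n:ℝ)^(2*c) * ((n:ℝ)*βn) ≤ 2*(n:ℝ)^(3*c+1) := e1
        _ < 1 * (4*(n:ℝ)^(3*c+2)) := by nlinarith
        _ = 1 * (4*(n:ℝ)^(3*c+2)) := rfl
    calc (∑ i, |(∑ k, a k * logistic ((inner ℝ (b k) (z i) : ℝ) + b0 k))
          - bld (a', p) (z i)|) / n ≤ (K:ℝ)*((n:ℝ)^c+1)/m := by
          rw [div_le_iff₀ hn0R]
          calc (∑ i, |(∑ k, a k * logistic ((inner ℝ (b k) (z i) : ℝ) + b0 k))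
              - bld (a', p) (z i)|) ≤ n * ((K:ℝ)*((n:ℝ)^c+1)/m) := hsum
            _ = (K:ℝ)*((n:ℝ)^c+1)/m * n := by ring
      _ < 1/((n:ℝ)*βn) := hE
  · -- the cardinality bound
    have h1 : G.card ≤ A.card^K * R.card^K := by
      refine le_trans (Finset.card_image_le) ?_
      rw [hI, Finset.card_product, Fintype.card_piFinset, Fintype.card_piFinset]
      simp [Finset.prod_const]
    have h2 : ((A.card^K * R.card^K : ℕ):ℝ) ≤ (n:ℝ)^((4*c+9+(3*c+6)*((d:ℝ)+2)) * K) := by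
      push_cast
      have hA' : (A.card:ℝ)^K ≤ ((n:ℝ)^(4*c+9))^(K:ℕ) :=
        pow_le_pow_left₀ (by positivity) hAcard K
      have hR' : (R.card:ℝ)^K ≤ ((n:ℝ)^((3*c+6)*((d:ℝ)+2)))^(K:ℕ) :=
        pow_le_pow_left₀ (by positivity) hR K
      calc (A.card:ℝ)^K * (R.card:ℝ)^K
          ≤ ((n:ℝ)^(4*c+9))^(K:ℕ) * ((n:ℝ)^((3*c+6)*((d:ℝ)+2)))^(K:ℕ) := by
            apply mul_le_mul hA' hR' (by positivity) (by positivity)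
        _ = (n:ℝ)^((4*c+9)*(K:ℝ)) * (n:ℝ)^(((3*c+6)*((d:ℝ)+2))*(K:ℝ)) := by
            rw [← Real.rpow_natCast ((n:ℝ)^(4*c+9)) K, ← Real.rpow_mul (x := (n:ℝ)) hn0R.le,
              ← Real.rpow_natCast ((n:ℝ)^((3*c+6)*((d:ℝ)+2))) K,
              ← Real.rpow_mul (x := (n:ℝ)) hn0R.le]
        _ = (n:ℝ)^((4*c+9+(3*c+6)*((d:ℝ)+2)) * K) := by rw [hmul]; congr 1; ring
    calc (G.card:ℝ) ≤ ((A.card^K * R.card^K : ℕ):ℝ) := by exact_mod_cast h1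
      _ ≤ (n:ℝ)^((4*c+9+(3*c+6)*((d:ℝ)+2)) * K) := h2

/-- Lemma 14: covering number bound for shallow logistic networks,
phrased via: the log of the least cover size `𝒩₁(1/(nβ_n),𝓕,x₁ⁿ)` is at most
`c₆₁ (log n) K`, i.e. there is a cover of size `N` with `log N ≤ c₆₁ (log n) K`. -/
theorem statement14 (d : ℕ) (c60 : ℝ) (hc60 : 0 < c60) :
    ∃ c61 : ℝ, 0 < c61 ∧
      ∀ (n K : ℕ) (γ βn : ℝ), 0 < γ → 0 < βn →
        max (max (K : ℝ) βn) γ ≤ (n : ℝ) ^ c60 →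
        ∀ z : Fin n → Evec d,
          ∃ N : ℕ, 1 ≤ N ∧ IsL1Cover n z (logClass d K γ) (1 / (n * βn)) N ∧
            Real.log N ≤ c61 * Real.log n * K := by
  refine ⟨4*c60 + 9 + (3*c60+6)*((d:ℝ)+2), by positivity, ?_⟩
  intro n K γ βn hγ hβn hmax z
  have hK : (K:ℝ) ≤ (n:ℝ)^c60 := le_trans (le_trans (le_max_left _ _) (le_max_left _ _)) hmax
  have hβ : βn ≤ (n:ℝ)^c60 := le_trans (le_trans (le_max_right _ _) (le_max_left _ _)) hmax
  have hγn : γ ≤ (n:ℝ)^c60 := le_trans (le_max_right _ _) hmax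
  rcases Nat.lt_or_ge n 2 with hn | hn2
  · interval_cases n
    · exfalso
      rw [Nat.cast_zero, Real.zero_rpow hc60.ne'] at hβ
      linarith
    · have h1 : ((1:ℕ):ℝ)^c60 = 1 := by rw [Nat.cast_one, Real.one_rpow]
      rw [h1] at hK hβ hγn
      have hK1 : K ≤ 1 := by exact_mod_cast hK
      refine ⟨1, le_refl 1, ?_, ?_⟩
      · have := case_one d K γ βn hβn hβ hγn hK1 z
        simpa using this
      · simp
  · obtain ⟨N, h1, h2, h3⟩ := case_main d c60 hc60 n K hn2 γ βn hβn hK hβ hγn z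
    refine ⟨N, h1, h2, ?_⟩
    have hN0 : (0:ℝ) < N := by exact_mod_cast h1
    have hn0 : (0:ℝ) < n := by
      have : (2:ℝ) ≤ (n:ℝ) := by exact_mod_cast hn2
      linarith
    calc Real.log N ≤ Real.log ((n:ℝ)^((4*c60+9+(3*c60+6)*((d:ℝ)+2)) * K)) :=
          Real.log_le_log hN0 h3
      _ = (4*c60+9+(3*c60+6)*((d:ℝ)+2)) * K * Real.log n := Real.log_rpow hn0 _
      _ = (4*c60+9+(3*c60+6)*((d:ℝ)+2)) * Real.log n * K := by ring

end
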